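/- Let q ≥ 1 and Δ ≥ 3 be integers, set p = Δ/(Δ−1), and let B be a symmetric invertible q×q real matrix with nonnegative entries. Suppose R is a q×q real matrix with nonnegative entries, not identically zero, which maximizes the tensorized norm ratio: for every q×q real matrix S with nonnegative entries, not identically zero, N_Δ(T(S))·N_p(R) ≤ N_Δ(T(R))·N_p(S). Then R has rank at most one; that is, there exist vectors u, v ∈ ℝ^q with nonnegative entries such that R_{jl} = u_j·v_l for all j,l. -/

import Mathlib

set_option maxHeartbeats 1600000

open Matrix

open Finset Real

namespace TNMR

lemma rpow_left_inj_nonneg {a b t : ℝ} (ha : 0 ≤ a) (hb : 0 ≤ b) (ht : t ≠ 0)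
    (h : a ^ t = b ^ t) : a = b := by
  have : (a ^ t) ^ t⁻¹ = (b ^ t) ^ t⁻¹ := by rw [h]
  rwa [← Real.rpow_mul ha, ← Real.rpow_mul hb, mul_inv_cancel₀ ht, Real.rpow_one,
    Real.rpow_one] at this

lemma young_eq {p q a b : ℝ} (hpq : Real.HolderConjugate p q) (ha : 0 ≤ a) (hb : 0 ≤ b)
    (h : a * b = a ^ p / p + b ^ q / q) : a ^ p = b ^ q := by
  rcases eq_or_lt_of_le ha with rfl | ha'
  · rw [Real.zero_rpow hpq.ne_zero] at h ⊢
    have hbq : 0 ≤ b ^ q := Real.rpow_nonneg hb q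
    have : b ^ q / q = 0 := by
      have hz : (0:ℝ) / p = 0 := zero_div p
      nlinarith [h, hz]
    have := (div_eq_zero_iff.1 this).resolve_right hpq.symm.ne_zero
    linarith
  rcases eq_or_lt_of_le hb with rfl | hb'
  · rw [Real.zero_rpow hpq.symm.ne_zero] at h ⊢
    have hap : 0 ≤ a ^ p := Real.rpow_nonneg ha p
    have : a ^ p / p = 0 := by
      have hz : (0:ℝ) / q = 0 := zero_div q
      nlinarith [h, hz]
    have := (div_eq_zero_iff.1 this).resolve_right hpq.ne_zero
    linarith
  by_contra hne
  have hu : (0:ℝ) < a ^ p := Real.rpow_pos_of_pos ha' p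
  have hv : (0:ℝ) < b ^ q := Real.rpow_pos_of_pos hb' q
  have hcc := strictConcaveOn_log_Ioi.2 (Set.mem_Ioi.2 hu) (Set.mem_Ioi.2 hv) hne
    hpq.inv_pos hpq.symm.inv_pos hpq.inv_add_inv_eq_one
  rw [smul_eq_mul, smul_eq_mul, smul_eq_mul, smul_eq_mul, Real.log_rpow ha',
    Real.log_rpow hb'] at hcc
  have h1 : p⁻¹ * (p * Real.log a) = Real.log a := by
    rw [← mul_assoc, inv_mul_cancel₀ hpq.ne_zero, one_mul]
  have h2 : q⁻¹ * (q * Real.log b) = Real.log b := by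
    rw [← mul_assoc, inv_mul_cancel₀ hpq.symm.ne_zero, one_mul]
  have harg : p⁻¹ * a ^ p + q⁻¹ * b ^ q = a * b := by
    rw [h]
    field_simp
  rw [h1, h2, harg, Real.log_mul ha'.ne' hb'.ne'] at hcc
  exact lt_irrefl _ hcc

lemma holder_eq {n : ℕ} {p q : ℝ} (hpq : Real.HolderConjugate p q) {x y : Fin n → ℝ}
    (hx : ∀ i, 0 ≤ x i) (hy : ∀ i, 0 ≤ y i)
    (hX : 0 < ∑ i, x i ^ p) (hY : 0 < ∑ i, y i ^ q)
    (heq : ∑ i, x i * y i = (∑ i, x i ^ p) ^ (1/p) * (∑ i, y i ^ q) ^ (1/q)) :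
    ∀ i, x i ^ p * (∑ j, y j ^ q) = y i ^ q * (∑ j, x j ^ p) := by
  set X := ∑ i, x i ^ p with hXdef
  set Y := ∑ i, y i ^ q with hYdef
  have hXp : (0:ℝ) < X ^ (1/p) := Real.rpow_pos_of_pos hX _
  have hYq : (0:ℝ) < Y ^ (1/q) := Real.rpow_pos_of_pos hY _
  set a : Fin n → ℝ := fun i => x i / X ^ (1/p) with hadef
  set b : Fin n → ℝ := fun i => y i / Y ^ (1/q) with hbdef
  have ha : ∀ i, 0 ≤ a i := fun i => div_nonneg (hx i) hXp.le
  have hb : ∀ i, 0 ≤ b i := fun i => div_nonneg (hy i) hYq.le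
  have hap : ∀ i, a i ^ p = x i ^ p / X := by
    intro i
    rw [hadef]
    rw [Real.div_rpow (hx i) hXp.le, ← Real.rpow_mul hX.le]
    rw [one_div, inv_mul_cancel₀ hpq.ne_zero, Real.rpow_one]
  have hbq : ∀ i, b i ^ q = y i ^ q / Y := by
    intro i
    rw [hbdef]
    rw [Real.div_rpow (hy i) hYq.le, ← Real.rpow_mul hY.le]
    rw [one_div, inv_mul_cancel₀ hpq.symm.ne_zero, Real.rpow_one]
  have hsab : ∑ i, a i * b i = 1 := by
    have : ∑ i, a i * b i = (∑ i, x i * y i) / (X ^ (1/p) * Y ^ (1/q)) := by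
      rw [Finset.sum_div]
      refine Finset.sum_congr rfl fun i _ => ?_
      show x i / X ^ (1/p) * (y i / Y ^ (1/q)) = x i * y i / (X ^ (1/p) * Y ^ (1/q))
      rw [div_mul_div_comm]
    rw [this, heq]
    field_simp
  have hsap : ∑ i, a i ^ p = 1 := by
    simp only [hap]
    rw [← Finset.sum_div, ← hXdef, div_self hX.ne']
  have hsbq : ∑ i, b i ^ q = 1 := by
    simp only [hbq]
    rw [← Finset.sum_div, ← hYdef, div_self hY.ne']
  have hyoung : ∀ i ∈ Finset.univ, a i * b i ≤ a i ^ p / p + b i ^ q / q := fun i _ =>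
    Real.young_inequality_of_nonneg (ha i) (hb i) hpq
  have hsum_eq : ∑ i, a i * b i = ∑ i, (a i ^ p / p + b i ^ q / q) := by
    rw [hsab, Finset.sum_add_distrib, ← Finset.sum_div, ← Finset.sum_div, hsap, hsbq]
    have := hpq.inv_add_inv_eq_one
    rw [div_eq_inv_mul, div_eq_inv_mul, mul_one, mul_one]
    linarith
  have hterm := (Finset.sum_eq_sum_iff_of_le hyoung).1 hsum_eq
  intro i
  have := young_eq hpq (ha i) (hb i) (hterm i (Finset.mem_univ i))
  rw [hap i, hbq i] at this
  field_simp at this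
  linarith [this]

noncomputable def np (p : ℝ) {n : ℕ} (x : Fin n → ℝ) : ℝ := (∑ i, x i ^ p) ^ (1/p)

lemma np_nonneg {p : ℝ} {n : ℕ} {x : Fin n → ℝ} (hx : ∀ i, 0 ≤ x i) : 0 ≤ np p x :=
  Real.rpow_nonneg (Finset.sum_nonneg fun i _ => Real.rpow_nonneg (hx i) p) _

lemma np_rpow {p : ℝ} (hp : 0 < p) {n : ℕ} (x : Fin n → ℝ) (hx : ∀ i, 0 ≤ x i) :
    np p x ^ p = ∑ i, x i ^ p := by
  rw [np, ← Real.rpow_mul (Finset.sum_nonneg fun i _ => Real.rpow_nonneg (hx i) p),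
    one_div, inv_mul_cancel₀ hp.ne', Real.rpow_one]

lemma np_pos {p : ℝ} (hp : 0 < p) {n : ℕ} {x : Fin n → ℝ} (hx : ∀ i, 0 ≤ x i)
    (hxn : ∃ i, x i ≠ 0) : 0 < np p x := by
  obtain ⟨i, hi⟩ := hxn
  refine Real.rpow_pos_of_pos ?_ _
  refine Finset.sum_pos' (fun j _ => Real.rpow_nonneg (hx j) p) ⟨i, Finset.mem_univ i, ?_⟩
  exact Real.rpow_pos_of_pos (lt_of_le_of_ne (hx i) (Ne.symm hi)) p

lemma np_zero {p : ℝ} (hp : 0 < p) {n : ℕ} : np p (fun _ : Fin n => (0:ℝ)) = 0 := by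
  unfold np
  rw [Finset.sum_congr rfl fun i _ => Real.zero_rpow hp.ne', Finset.sum_const_zero,
    Real.zero_rpow (by positivity : (1:ℝ)/p ≠ 0)]

lemma np_smul {p : ℝ} (hp : 0 < p) {n : ℕ} {t : ℝ} (ht : 0 ≤ t) (x : Fin n → ℝ)
    (hx : ∀ i, 0 ≤ x i) : np p (fun i => t * x i) = t * np p x := by
  unfold np
  have : ∀ i, (t * x i) ^ p = t ^ p * x i ^ p := fun i => Real.mul_rpow ht (hx i)
  simp only [this]
  rw [← Finset.mul_sum, Real.mul_rpow (Real.rpow_nonneg ht p)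
    (Finset.sum_nonneg fun i _ => Real.rpow_nonneg (hx i) p),
    ← Real.rpow_mul ht, mul_one_div, div_self hp.ne', Real.rpow_one]

lemma np_add_le {p : ℝ} (hp : 1 ≤ p) {n : ℕ} (x y : Fin n → ℝ) (hx : ∀ i, 0 ≤ x i)
    (hy : ∀ i, 0 ≤ y i) : np p (fun i => x i + y i) ≤ np p x + np p y :=
  Real.Lp_add_le_of_nonneg (s := Finset.univ) hp (fun i _ => hx i) (fun i _ => hy i)

lemma np_sum_le {p : ℝ} (hp : 1 ≤ p) {n : ℕ} {ι : Type*} (s : Finset ι) (v : ι → Fin n → ℝ)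
    (hv : ∀ l, ∀ j, 0 ≤ v l j) :
    np p (fun j => ∑ l ∈ s, v l j) ≤ ∑ l ∈ s, np p (v l) := by
  classical
  induction s using Finset.induction_on with
  | empty => simp only [Finset.sum_empty]; rw [np_zero (lt_of_lt_of_le one_pos hp)]
  | insert _ _ hnotmem ih =>
    rename_i a s'
    simp only [Finset.sum_insert hnotmem]
    calc np p (fun j => v a j + ∑ l ∈ s', v l j)
        ≤ np p (v a) + np p (fun j => ∑ l ∈ s', v l j) :=
          np_add_le hp _ _ (fun j => hv a j)
            (fun j => Finset.sum_nonneg fun l _ => hv l j)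
      _ ≤ np p (v a) + ∑ l ∈ s', np p (v l) := by linarith [ih]

lemma mink_eq {n : ℕ} {p q : ℝ} (hpq : Real.HolderConjugate p q) {x y : Fin n → ℝ}
    (hx : ∀ i, 0 ≤ x i) (hy : ∀ i, 0 ≤ y i) (hxn : ∃ i, x i ≠ 0) (hyn : ∃ i, y i ≠ 0)
    (heq : np p (fun i => x i + y i) = np p x + np p y) :
    ∃ t : ℝ, 0 < t ∧ ∀ i, y i = t * x i := by
  have hp0 : (0:ℝ) < p := hpq.pos
  have hxy : ∀ i, 0 ≤ x i + y i := fun i => add_nonneg (hx i) (hy i)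
  set A := np p x with hAdef
  set Bn := np p y with hBdef
  set C := np p (fun i => x i + y i) with hCdef
  have hA : 0 < A := np_pos hp0 hx hxn
  have hB : 0 < Bn := np_pos hp0 hy hyn
  have hC : 0 < C := by rw [heq]; linarith
  set z : Fin n → ℝ := fun i => (x i + y i) ^ (p - 1) with hzdef
  have hz : ∀ i, 0 ≤ z i := fun i => Real.rpow_nonneg (hxy i) _
  have hzq : ∀ i, z i ^ q = (x i + y i) ^ p := by
    intro i
    show ((x i + y i) ^ (p-1)) ^ q = (x i + y i) ^ p
    rw [← Real.rpow_mul (hxy i), hpq.sub_one_mul_conj]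
  have hsum_zq : ∑ i, z i ^ q = C ^ p := by
    rw [hCdef, np_rpow hp0 _ hxy]
    exact Finset.sum_congr rfl fun i _ => hzq i
  have hCq : (C ^ p) ^ (1/q) = C ^ (p - 1) := by
    rw [← Real.rpow_mul hC.le, mul_one_div, hpq.div_conj_eq_sub_one]
  have hmulself : ∀ a : ℝ, 0 ≤ a → a * a ^ (p - 1) = a ^ p := by
    intro a hax
    rcases eq_or_lt_of_le hax with rfl | hax'
    · simp [Real.zero_rpow hp0.ne']
    · nth_rewrite 1 [← Real.rpow_one a]
      rw [← Real.rpow_add hax']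
      norm_num
  have hsplit : (∑ i, x i * z i) + (∑ i, y i * z i) = C ^ p := by
    rw [← Finset.sum_add_distrib]
    rw [np_rpow hp0 _ hxy]
    refine Finset.sum_congr rfl fun i _ => ?_
    rw [← add_mul]
    exact hmulself _ (hxy i)
  have hH1 : ∑ i, x i * z i ≤ A * C ^ (p - 1) := by
    calc ∑ i, x i * z i ≤ (∑ i, x i ^ p) ^ (1/p) * (∑ i, z i ^ q) ^ (1/q) :=
          Real.inner_le_Lp_mul_Lq_of_nonneg (s := Finset.univ) hpq (fun i _ => hx i) (fun i _ => hz i)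
      _ = A * C ^ (p - 1) := by rw [hsum_zq, hCq]; rfl
  have hH2 : ∑ i, y i * z i ≤ Bn * C ^ (p - 1) := by
    calc ∑ i, y i * z i ≤ (∑ i, y i ^ p) ^ (1/p) * (∑ i, z i ^ q) ^ (1/q) :=
          Real.inner_le_Lp_mul_Lq_of_nonneg (s := Finset.univ) hpq (fun i _ => hy i) (fun i _ => hz i)
      _ = Bn * C ^ (p - 1) := by rw [hsum_zq, hCq]; rfl
  have htot : C ^ p = (A + Bn) * C ^ (p - 1) := by
    rw [← heq, ← hmulself C hC.le]
  have hE1 : ∑ i, x i * z i = A * C ^ (p - 1) := by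
    have := hsplit
    rw [htot] at this
    linarith
  have hE2 : ∑ i, y i * z i = Bn * C ^ (p - 1) := by
    have := hsplit
    rw [htot] at this
    linarith
  have hXpos : (0:ℝ) < ∑ i, x i ^ p := by
    have := np_pos hp0 hx hxn
    rw [← np_rpow hp0 x hx]
    exact Real.rpow_pos_of_pos this p
  have hYpos : (0:ℝ) < ∑ i, y i ^ p := by
    have := np_pos hp0 hy hyn
    rw [← np_rpow hp0 y hy]
    exact Real.rpow_pos_of_pos this p
  have hZpos : (0:ℝ) < ∑ i, z i ^ q := by rw [hsum_zq]; exact Real.rpow_pos_of_pos hC p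
  have he1 := holder_eq hpq hx hz hXpos hZpos (by rw [hE1, hsum_zq, hCq]; rfl)
  have he2 := holder_eq hpq hy hz hYpos hZpos (by rw [hE2, hsum_zq, hCq]; rfl)
  have hsx : ∑ j, x j ^ p = A ^ p := (np_rpow hp0 x hx).symm
  have hsy : ∑ j, y j ^ p = Bn ^ p := (np_rpow hp0 y hy).symm
  refine ⟨Bn / A, div_pos hB hA, fun i => ?_⟩
  have e1 := he1 i
  have e2 := he2 i
  rw [hzq i, hsum_zq, hsx] at e1
  rw [hzq i, hsum_zq, hsy] at e2
  -- e1 : x i ^ p * C ^ p = (x i + y i) ^ p * A ^ p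
  -- e2 : y i ^ p * C ^ p = (x i + y i) ^ p * Bn ^ p
  have hCp : (0:ℝ) < C ^ p := Real.rpow_pos_of_pos hC p
  have hAp : (0:ℝ) < A ^ p := Real.rpow_pos_of_pos hA p
  have hBp : (0:ℝ) < Bn ^ p := Real.rpow_pos_of_pos hB p
  have key : (x i * Bn) ^ p = (y i * A) ^ p := by
    rw [Real.mul_rpow (hx i) hB.le, Real.mul_rpow (hy i) hA.le]
    have : x i ^ p * Bn ^ p * C ^ p = y i ^ p * A ^ p * C ^ p := by
      nlinarith [e1, e2]
    exact mul_right_cancel₀ hCp.ne' this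
  have := rpow_left_inj_nonneg (mul_nonneg (hx i) hB.le) (mul_nonneg (hy i) hA.le)
    hp0.ne' key
  field_simp
  nlinarith [this]

lemma rpow_one_div_rpow {a t : ℝ} (ha : 0 ≤ a) (ht : t ≠ 0) : (a ^ ((1:ℝ)/t)) ^ t = a := by
  rw [← Real.rpow_mul ha, one_div, inv_mul_cancel₀ ht, Real.rpow_one]

lemma np_outer {n : ℕ} {t : ℝ} (ht : 0 < t) (u v : Fin n → ℝ) (hu : ∀ i, 0 ≤ u i)
    (hv : ∀ i, 0 ≤ v i) :
    (∑ i, ∑ k, (u i * v k) ^ t) ^ ((1:ℝ)/t) = np t u * np t v := by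
  have h1 : ∀ i, ∑ k, (u i * v k) ^ t = u i ^ t * ∑ k, v k ^ t := by
    intro i
    rw [Finset.mul_sum]
    exact Finset.sum_congr rfl fun k _ => Real.mul_rpow (hu i) (hv k)
  rw [Finset.sum_congr rfl fun i _ => h1 i, ← Finset.sum_mul,
    Real.mul_rpow (Finset.sum_nonneg fun i _ => Real.rpow_nonneg (hu i) t)
      (Finset.sum_nonneg fun k _ => Real.rpow_nonneg (hv k) t)]
  rfl

lemma rpow_superadd {X Y s : ℝ} (hX : 0 < X) (hY : 0 < Y) (hs : 1 < s) :
    X ^ s + Y ^ s < (X + Y) ^ s := by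
  have hXY : (0:ℝ) < X + Y := by linarith
  have hrw : (1:ℝ) + (s - 1) = s := by ring
  have e1 := Real.rpow_add hXY 1 (s - 1)
  rw [hrw, Real.rpow_one] at e1
  have e2 := Real.rpow_add hX 1 (s - 1)
  rw [hrw, Real.rpow_one] at e2
  have e3 := Real.rpow_add hY 1 (s - 1)
  rw [hrw, Real.rpow_one] at e3
  have h2 : X ^ (s-1) < (X+Y) ^ (s-1) := Real.rpow_lt_rpow hX.le (by linarith) (by linarith)
  have h3 : Y ^ (s-1) < (X+Y) ^ (s-1) := Real.rpow_lt_rpow hY.le (by linarith) (by linarith)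
  rw [e1, e2, e3]
  have hh2 := mul_lt_mul_of_pos_left h2 hX
  have hh3 := mul_lt_mul_of_pos_left h3 hY
  nlinarith

noncomputable def Bv {n : ℕ} (B : Matrix (Fin n) (Fin n) ℝ) (x : Fin n → ℝ) : Fin n → ℝ :=
  fun k => ∑ l, B k l * x l

lemma Bv_apply {n : ℕ} (B : Matrix (Fin n) (Fin n) ℝ) (x : Fin n → ℝ) (k : Fin n) :
    Bv B x k = ∑ l, B k l * x l := rfl

lemma Bv_nonneg {n : ℕ} {B : Matrix (Fin n) (Fin n) ℝ} (hB : ∀ i j, 0 ≤ B i j)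
    {x : Fin n → ℝ} (hx : ∀ i, 0 ≤ x i) : ∀ k, 0 ≤ Bv B x k :=
  fun k => Finset.sum_nonneg fun l _ => mul_nonneg (hB k l) (hx l)

end TNMR


/-- The entrywise t-norm N_t(S) = (∑_{j,l} |S_{jl}|^t)^{1/t} of a q×q matrix. -/
noncomputable def matEntryNorm {q : ℕ} (t : ℝ) (S : Matrix (Fin q) (Fin q) ℝ) : ℝ :=
  (∑ j, ∑ l, |S j l| ^ t) ^ (1 / t)

/-- The action T(S)_{ik} = ∑_{j,l} B_{ij} B_{kl} S_{jl} of the Kronecker product B⊗B. -/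
noncomputable def tensorAct {q : ℕ} (B S : Matrix (Fin q) (Fin q) ℝ) :
    Matrix (Fin q) (Fin q) ℝ :=
  Matrix.of fun i k => ∑ j, ∑ l, B i j * B k l * S j l

open TNMR in
theorem tensor_norm_maximizer_rank_one
    (q Δ : ℕ) (hq : 1 ≤ q) (hΔ : 3 ≤ Δ)
    (B : Matrix (Fin q) (Fin q) ℝ) (hBsymm : B.IsSymm)
    (hBnonneg : ∀ i j, 0 ≤ B i j) (hBinv : IsUnit B)
    (R : Matrix (Fin q) (Fin q) ℝ) (hRnonneg : ∀ j l, 0 ≤ R j l) (hRne : R ≠ 0)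
    (hmax : ∀ S : Matrix (Fin q) (Fin q) ℝ, (∀ j l, 0 ≤ S j l) → S ≠ 0 →
      matEntryNorm (Δ : ℝ) (tensorAct B S) * matEntryNorm ((Δ : ℝ) / ((Δ : ℝ) - 1)) R ≤
      matEntryNorm (Δ : ℝ) (tensorAct B R) * matEntryNorm ((Δ : ℝ) / ((Δ : ℝ) - 1)) S) :
    ∃ u v : Fin q → ℝ, (∀ j, 0 ≤ u j) ∧ (∀ l, 0 ≤ v l) ∧ ∀ j l, R j l = u j * v l := by
  classical
  set d : ℝ := (Δ : ℝ) with hddef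
  set pr : ℝ := d / (d - 1) with hprdef
  have hd3 : (3:ℝ) ≤ d := by rw [hddef]; exact_mod_cast hΔ
  have hd0 : (0:ℝ) < d := by linarith
  have hdm1 : (0:ℝ) < d - 1 := by linarith
  have hpr1 : 1 < pr := by rw [hprdef, lt_div_iff₀ hdm1]; linarith
  have hpr0 : (0:ℝ) < pr := by linarith
  have hpq : pr.HolderConjugate d := by
    refine Real.holderConjugate_iff.2 ⟨hpr1, ?_⟩
    rw [hprdef]
    field_simp
    ring
  have hpr_le : (1:ℝ) ≤ pr := hpr1.le
  have hBs : ∀ a b, B a b = B b a := fun a b => by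
    have := congrFun (congrFun hBsymm a) b
    exact ((Matrix.transpose_apply B a b) ▸ this).symm
  -- nonzero entry of R
  have hRex : ∃ j l, R j l ≠ 0 := by
    by_contra hcon
    push_neg at hcon
    exact hRne (Matrix.ext fun j l => by simpa using hcon j l)
  obtain ⟨j0, l0, hj0l0⟩ := hRex
  have hRj0l0 : (0:ℝ) < R j0 l0 := lt_of_le_of_ne (hRnonneg j0 l0) (Ne.symm hj0l0)
  -- unfolding matEntryNorm on nonneg matrices
  have hmat : ∀ (t : ℝ) (S : Matrix (Fin q) (Fin q) ℝ), (∀ a b, 0 ≤ S a b) →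
      matEntryNorm t S = (∑ a, ∑ b, S a b ^ t) ^ ((1:ℝ)/t) := by
    intro t S hS
    unfold matEntryNorm
    congr 1
    exact Finset.sum_congr rfl fun a _ =>
      Finset.sum_congr rfl fun b _ => by rw [abs_of_nonneg (hS a b)]
  -- tensorAct as matrix product, nonvanishing
  have hTmul : tensorAct B R = B * R * B := by
    ext i k
    show ∑ j, ∑ l, B i j * B k l * R j l = (B * R * B) i k
    rw [Matrix.mul_apply]
    have : ∀ x, (B * R) i x * B x k = ∑ j, B i j * B k x * R j x := by
      intro x
      rw [Matrix.mul_apply, Finset.sum_mul]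
      exact Finset.sum_congr rfl fun j _ => by rw [hBs x k]; ring
    rw [Finset.sum_congr rfl fun x _ => this x, Finset.sum_comm]
  have hTne : tensorAct B R ≠ 0 := by
    rw [hTmul]
    intro h0
    have h1 : B * (R * B) = 0 := by rw [← Matrix.mul_assoc]; exact h0
    have h2 : R * B = 0 := by
      rwa [IsUnit.mul_right_eq_zero hBinv] at h1
    have h3 : R = 0 := by rwa [IsUnit.mul_left_eq_zero hBinv] at h2
    exact hRne h3
  have hTentry : ∀ i k, tensorAct B R i k = Bv B (fun j => ∑ l, B k l * R j l) i := by
    intro i k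
    show ∑ j, ∑ l, B i j * B k l * R j l = ∑ j, B i j * ∑ l, B k l * R j l
    refine Finset.sum_congr rfl fun j _ => ?_
    rw [Finset.mul_sum]
    exact Finset.sum_congr rfl fun l _ => by ring
  have hTnn : ∀ i k, 0 ≤ tensorAct B R i k := by
    intro i k
    rw [hTentry i k]
    exact Bv_nonneg hBnonneg
      (fun j => Finset.sum_nonneg fun l _ => mul_nonneg (hBnonneg k l) (hRnonneg j l)) i
  -- the two norms of R
  set A : ℝ := matEntryNorm d (tensorAct B R) with hAdef
  set P : ℝ := matEntryNorm pr R with hPdef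
  have hApos : (0:ℝ) < A := by
    have hex : ∃ i k, tensorAct B R i k ≠ 0 := by
      by_contra hcon
      push_neg at hcon
      exact hTne (Matrix.ext fun i k => by simpa using hcon i k)
    obtain ⟨i1, k1, hik⟩ := hex
    rw [hAdef, hmat d _ hTnn]
    refine Real.rpow_pos_of_pos ?_ _
    refine Finset.sum_pos' (fun i _ => Finset.sum_nonneg fun k _ =>
      Real.rpow_nonneg (hTnn i k) d) ⟨i1, Finset.mem_univ i1, ?_⟩
    refine Finset.sum_pos' (fun k _ => Real.rpow_nonneg (hTnn i1 k) d)
      ⟨k1, Finset.mem_univ k1, Real.rpow_pos_of_pos (lt_of_le_of_ne (hTnn i1 k1) (Ne.symm hik)) d⟩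
  have hPpos : (0:ℝ) < P := by
    rw [hPdef, hmat pr R (fun a b => hRnonneg a b)]
    refine Real.rpow_pos_of_pos ?_ _
    refine Finset.sum_pos' (fun j _ => Finset.sum_nonneg fun l _ =>
      Real.rpow_nonneg (hRnonneg j l) pr) ⟨j0, Finset.mem_univ j0, ?_⟩
    exact Finset.sum_pos' (fun l _ => Real.rpow_nonneg (hRnonneg j0 l) pr)
      ⟨l0, Finset.mem_univ l0, Real.rpow_pos_of_pos hRj0l0 pr⟩
  set lam : ℝ := Real.sqrt (A / P) with hlamdef
  have hlam2 : lam * lam = A / P := Real.mul_self_sqrt (div_nonneg hApos.le hPpos.le)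
  have hlampos : (0:ℝ) < lam := Real.sqrt_pos.2 (div_pos hApos hPpos)
  -- KEY: the operator bound from maximality, via rank-one test matrices
  have key : ∀ x : Fin q → ℝ, (∀ i, 0 ≤ x i) → np d (Bv B x) ≤ lam * np pr x := by
    intro x hx
    by_cases hxz : ∃ i, x i ≠ 0
    · set S : Matrix (Fin q) (Fin q) ℝ := Matrix.of fun j l => x j * x l with hSdef
      have hSnn : ∀ j l, 0 ≤ S j l := fun j l => mul_nonneg (hx j) (hx l)
      obtain ⟨i1, hi1⟩ := hxz
      have hxi1 : 0 < x i1 := lt_of_le_of_ne (hx i1) (Ne.symm hi1)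
      have hSne : S ≠ 0 := by
        intro h0
        have : S i1 i1 = 0 := by rw [h0]; rfl
        have : x i1 * x i1 = 0 := this
        nlinarith
      have hspec := hmax S hSnn hSne
      have hTSe : ∀ i k, tensorAct B S i k = Bv B x i * Bv B x k := by
        intro i k
        show ∑ j, ∑ l, B i j * B k l * S j l = (∑ j, B i j * x j) * (∑ l, B k l * x l)
        rw [Finset.sum_mul_sum]
        refine Finset.sum_congr rfl fun j _ => Finset.sum_congr rfl fun l _ => ?_
        show B i j * B k l * (x j * x l) = B i j * x j * (B k l * x l)
        ring
      have hTSnn : ∀ a b, 0 ≤ tensorAct B S a b := by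
        intro a b
        rw [hTSe a b]
        exact mul_nonneg (Bv_nonneg hBnonneg hx a) (Bv_nonneg hBnonneg hx b)
      have hTSnorm : matEntryNorm d (tensorAct B S) = np d (Bv B x) * np d (Bv B x) := by
        rw [hmat d (tensorAct B S) hTSnn,
          show (∑ a, ∑ b, tensorAct B S a b ^ d) = ∑ a, ∑ b, (Bv B x a * Bv B x b) ^ d from
            Finset.sum_congr rfl fun a _ => Finset.sum_congr rfl fun b _ => by rw [hTSe a b]]
        exact np_outer hd0 _ _ (Bv_nonneg hBnonneg hx) (Bv_nonneg hBnonneg hx)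
      have hSnorm : matEntryNorm pr S = np pr x * np pr x := by
        rw [hmat pr S hSnn,
          show (∑ a, ∑ b, S a b ^ pr) = ∑ a, ∑ b, (x a * x b) ^ pr from
            Finset.sum_congr rfl fun a _ => Finset.sum_congr rfl fun b _ => rfl]
        exact np_outer hpr0 _ _ hx hx
      rw [hTSnorm, hSnorm] at hspec
      -- hspec : np d (Bv B x) * np d (Bv B x) * P ≤ A * (np pr x * np pr x)
      have ha : 0 ≤ np d (Bv B x) := np_nonneg (Bv_nonneg hBnonneg hx)
      have hb : 0 ≤ np pr x := np_nonneg hx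
      have hsq : np d (Bv B x) * np d (Bv B x) ≤ (lam * np pr x) * (lam * np pr x) := by
        have e : (lam * np pr x) * (lam * np pr x) = A / P * (np pr x * np pr x) := by
          rw [← hlam2]; ring
        rw [e, div_mul_eq_mul_div, le_div_iff₀ hPpos]
        nlinarith [hspec]
      nlinarith [hsq, ha, hb, mul_nonneg hlampos.le hb]
    · push_neg at hxz
      have hx0 : Bv B x = fun _ => (0:ℝ) := by
        funext k
        rw [Bv_apply]
        rw [Finset.sum_congr rfl fun l _ => by rw [hxz l, mul_zero]]
        exact Finset.sum_const_zero
      rw [hx0, np_zero hd0]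
      exact mul_nonneg hlampos.le (np_nonneg hx)
  -- column data
  set w : Fin q → ℝ := fun l => np pr (fun j => R j l) with hwdef
  have hwnn : ∀ l, 0 ≤ w l := fun l => np_nonneg (fun j => hRnonneg j l)
  have hcolnn : ∀ k j, 0 ≤ ∑ l, B k l * R j l :=
    fun k j => Finset.sum_nonneg fun l _ => mul_nonneg (hBnonneg k l) (hRnonneg j l)
  -- P = np pr w
  have hPw : np pr w = P := by
    have h1 : ∀ l, w l ^ pr = ∑ j, R j l ^ pr := by
      intro l
      rw [hwdef]
      exact np_rpow hpr0 _ (fun j => hRnonneg j l)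
    have h2 : np pr w ^ pr = ∑ l, ∑ j, R j l ^ pr := by
      rw [np_rpow hpr0 w hwnn]
      exact Finset.sum_congr rfl fun l _ => h1 l
    have h3 : P ^ pr = ∑ j, ∑ l, R j l ^ pr := by
      rw [hPdef, hmat pr R (fun a b => hRnonneg a b)]
      exact rpow_one_div_rpow (Finset.sum_nonneg fun j _ => Finset.sum_nonneg fun l _ =>
        Real.rpow_nonneg (hRnonneg j l) pr) hpr0.ne'
    refine rpow_left_inj_nonneg (np_nonneg hwnn) hPpos.le hpr0.ne' ?_
    rw [h2, h3, Finset.sum_comm]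
  -- A^d as a sum over columns
  have hAd : A ^ d = ∑ k, np d (Bv B (fun j => ∑ l, B k l * R j l)) ^ d := by
    have h1 : A ^ d = ∑ i, ∑ k, tensorAct B R i k ^ d := by
      rw [hAdef, hmat d _ hTnn]
      exact rpow_one_div_rpow (Finset.sum_nonneg fun i _ => Finset.sum_nonneg fun k _ =>
        Real.rpow_nonneg (hTnn i k) d) hd0.ne'
    rw [h1]
    rw [Finset.sum_congr rfl fun i (_ : i ∈ Finset.univ) =>
      Finset.sum_congr rfl fun k _ => by rw [hTentry i k]]
    rw [Finset.sum_comm]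
    exact Finset.sum_congr rfl fun k _ =>
      (np_rpow hd0 _ (Bv_nonneg hBnonneg (fun j => hcolnn k j))).symm
  -- Minkowski step
  have hmink : ∀ k, np pr (fun j => ∑ l, B k l * R j l) ≤ Bv B w k := by
    intro k
    have h1 := np_sum_le hpr_le Finset.univ (fun l j => B k l * R j l)
      (fun l j => mul_nonneg (hBnonneg k l) (hRnonneg j l))
    have h2 : ∀ l, np pr (fun j => B k l * R j l) = B k l * w l := by
      intro l
      rw [hwdef]
      exact np_smul hpr0 (hBnonneg k l) _ (fun j => hRnonneg j l)
    calc np pr (fun j => ∑ l, B k l * R j l) ≤ ∑ l, np pr (fun j => B k l * R j l) := h1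
      _ = ∑ l, B k l * w l := Finset.sum_congr rfl fun l _ => h2 l
      _ = Bv B w k := rfl
  -- the chain of inequalities, all forced to be equalities
  have hcol_nonneg : ∀ k, ∀ j, (0:ℝ) ≤ (fun j => ∑ l, B k l * R j l) j := fun k j => hcolnn k j
  have t12 : ∀ k ∈ Finset.univ, np d (Bv B (fun j => ∑ l, B k l * R j l)) ^ d ≤
      (lam * np pr (fun j => ∑ l, B k l * R j l)) ^ d := fun k _ =>
    Real.rpow_le_rpow (np_nonneg (Bv_nonneg hBnonneg (hcol_nonneg k)))
      (key _ (hcol_nonneg k)) hd0.le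
  have t23 : ∀ k ∈ Finset.univ, (lam * np pr (fun j => ∑ l, B k l * R j l)) ^ d ≤
      (lam * Bv B w k) ^ d := fun k _ =>
    Real.rpow_le_rpow (mul_nonneg hlampos.le (np_nonneg (hcol_nonneg k)))
      (mul_le_mul_of_nonneg_left (hmink k) hlampos.le) hd0.le
  have e_s3 : ∑ k, (lam * Bv B w k) ^ d = lam ^ d * np d (Bv B w) ^ d := by
    rw [np_rpow hd0 _ (Bv_nonneg hBnonneg hwnn), Finset.mul_sum]
    exact Finset.sum_congr rfl fun k _ =>
      Real.mul_rpow hlampos.le (Bv_nonneg hBnonneg hwnn k)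
  have t45 : np d (Bv B w) ≤ lam * P := by
    have := key w hwnn
    rwa [hPw] at this
  have t34 : lam ^ d * np d (Bv B w) ^ d ≤ lam ^ d * (lam * P) ^ d :=
    mul_le_mul_of_nonneg_left
      (Real.rpow_le_rpow (np_nonneg (Bv_nonneg hBnonneg hwnn)) t45 hd0.le)
      (Real.rpow_nonneg hlampos.le d)
  have e_last : lam ^ d * (lam * P) ^ d = A ^ d := by
    rw [← Real.mul_rpow hlampos.le (mul_nonneg hlampos.le hPpos.le)]
    have h : lam * lam * P = A := by
      rw [hlam2]; field_simp
    rw [← mul_assoc, h]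
  have hsum12 := Finset.sum_le_sum t12
  have hsum23 := Finset.sum_le_sum t23
  have h23eq : ∑ k, (lam * np pr (fun j => ∑ l, B k l * R j l)) ^ d =
      ∑ k, (lam * Bv B w k) ^ d := by
    refine le_antisymm hsum23 ?_
    linarith [hsum12, hsum23, t34, e_s3, e_last, hAd]
  have h45eq : np d (Bv B w) ^ d = (lam * P) ^ d := by
    have h1 : lam ^ d * np d (Bv B w) ^ d = lam ^ d * (lam * P) ^ d := by
      refine le_antisymm t34 ?_
      linarith [hsum12, hsum23, hAd, e_s3, e_last]
    exact mul_left_cancel₀ (Real.rpow_pos_of_pos hlampos d).ne' h1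
  -- equalities extracted
  have eq2 : ∀ k, np pr (fun j => ∑ l, B k l * R j l) = Bv B w k := by
    intro k
    have hterm := (Finset.sum_eq_sum_iff_of_le t23).1 h23eq k (Finset.mem_univ k)
    have := rpow_left_inj_nonneg
      (mul_nonneg hlampos.le (np_nonneg (hcol_nonneg k)))
      (mul_nonneg hlampos.le (Bv_nonneg hBnonneg hwnn k)) hd0.ne' hterm
    exact mul_left_cancel₀ hlampos.ne' this
  have eq4 : np d (Bv B w) = lam * P :=
    rpow_left_inj_nonneg (np_nonneg (Bv_nonneg hBnonneg hwnn))
      (mul_nonneg hlampos.le hPpos.le) hd0.ne' h45eq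
    -- pairwise proportionality of nonzero columns linked by a row of B
  have prop : ∀ (k l1 l2 : Fin q), l1 ≠ l2 → 0 < B k l1 → 0 < B k l2 →
      (∃ j, R j l1 ≠ 0) → (∃ j, R j l2 ≠ 0) →
      ∃ t : ℝ, 0 < t ∧ ∀ j, R j l2 = t * R j l1 := by
    intro k l1 l2 hne hB1 hB2 hc1 hc2
    have hnpv : ∀ l, np pr (fun j => B k l * R j l) = B k l * w l := by
      intro l
      simp only [hwdef]
      exact np_smul hpr0 (hBnonneg k l) _ (fun j => hRnonneg j l)
    have hl2mem : l2 ∈ Finset.univ.erase l1 :=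
      Finset.mem_erase.2 ⟨hne.symm, Finset.mem_univ l2⟩
    have hsplitF : ∀ F : Fin q → ℝ, ∑ l, F l =
        F l1 + (F l2 + ∑ l ∈ (Finset.univ.erase l1).erase l2, F l) := by
      intro F
      rw [← Finset.add_sum_erase _ F (Finset.mem_univ l1), ← Finset.add_sum_erase _ F hl2mem]
    have hpairnn : ∀ j, (0:ℝ) ≤ B k l1 * R j l1 + B k l2 * R j l2 := fun j =>
      add_nonneg (mul_nonneg (hBnonneg k l1) (hRnonneg j l1))
        (mul_nonneg (hBnonneg k l2) (hRnonneg j l2))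
    have hrestnn : ∀ j, (0:ℝ) ≤ ∑ l ∈ (Finset.univ.erase l1).erase l2, B k l * R j l :=
      fun j => Finset.sum_nonneg fun l _ => mul_nonneg (hBnonneg k l) (hRnonneg j l)
    have hck : (fun j => ∑ l, B k l * R j l) = (fun j => (B k l1 * R j l1 + B k l2 * R j l2) +
        ∑ l ∈ (Finset.univ.erase l1).erase l2, B k l * R j l) := by
      funext j
      rw [hsplitF (fun l => B k l * R j l)]
      ring
    have hub : np pr (fun j => ∑ l, B k l * R j l) ≤
        np pr (fun j => B k l1 * R j l1 + B k l2 * R j l2) +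
        np pr (fun j => ∑ l ∈ (Finset.univ.erase l1).erase l2, B k l * R j l) := by
      rw [hck]
      exact np_add_le hpr_le _ _ hpairnn hrestnn
    have hrest : np pr (fun j => ∑ l ∈ (Finset.univ.erase l1).erase l2, B k l * R j l) ≤
        ∑ l ∈ (Finset.univ.erase l1).erase l2, np pr (fun j => B k l * R j l) :=
      np_sum_le hpr_le _ (fun l j => B k l * R j l)
        (fun l j => mul_nonneg (hBnonneg k l) (hRnonneg j l))
    have hpair_le : np pr (fun j => B k l1 * R j l1 + B k l2 * R j l2) ≤
        np pr (fun j => B k l1 * R j l1) + np pr (fun j => B k l2 * R j l2) :=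
      np_add_le hpr_le _ _ (fun j => mul_nonneg (hBnonneg k l1) (hRnonneg j l1))
        (fun j => mul_nonneg (hBnonneg k l2) (hRnonneg j l2))
    have hlo : Bv B w k = B k l1 * w l1 + (B k l2 * w l2 +
        ∑ l ∈ (Finset.univ.erase l1).erase l2, B k l * w l) := by
      rw [Bv_apply]
      exact hsplitF (fun l => B k l * w l)
    have hrest_eq : ∑ l ∈ (Finset.univ.erase l1).erase l2, np pr (fun j => B k l * R j l) =
        ∑ l ∈ (Finset.univ.erase l1).erase l2, B k l * w l :=
      Finset.sum_congr rfl fun l _ => hnpv l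
    have hpair_ge : B k l1 * w l1 + B k l2 * w l2 ≤
        np pr (fun j => B k l1 * R j l1 + B k l2 * R j l2) := by
      have h1 := eq2 k
      rw [hlo] at h1
      rw [← hrest_eq] at h1
      linarith [hub, hrest, h1]
    have hpair_eq : np pr (fun j => B k l1 * R j l1 + B k l2 * R j l2) =
        np pr (fun j => B k l1 * R j l1) + np pr (fun j => B k l2 * R j l2) := by
      refine le_antisymm hpair_le ?_
      rw [hnpv l1, hnpv l2] at hpair_le ⊢
      linarith [hpair_ge]
    obtain ⟨j1, hj1⟩ := hc1
    obtain ⟨j2, hj2⟩ := hc2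
    obtain ⟨t, ht, hteq⟩ := mink_eq hpq
      (fun j => mul_nonneg (hBnonneg k l1) (hRnonneg j l1))
      (fun j => mul_nonneg (hBnonneg k l2) (hRnonneg j l2))
      ⟨j1, by positivity⟩ ⟨j2, by positivity⟩ hpair_eq
    refine ⟨t * B k l1 / B k l2, by positivity, fun j => ?_⟩
    have h := hteq j
    have hB2' : B k l2 ≠ 0 := hB2.ne'
    field_simp
    linear_combination h
  -- main case split: either all nonzero columns are proportional to column l0, or not
  by_cases hall : ∀ l, (∃ j, R j l ≠ 0) → ∃ t : ℝ, 0 < t ∧ ∀ j, R j l = t * R j l0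
  · have hv : ∀ l, ∃ t : ℝ, 0 ≤ t ∧ ∀ j, R j l = t * R j l0 := by
      intro l
      by_cases hl : ∃ j, R j l ≠ 0
      · obtain ⟨t, ht, hteq⟩ := hall l hl
        exact ⟨t, ht.le, hteq⟩
      · push_neg at hl
        exact ⟨0, le_refl 0, fun j => by rw [hl j, zero_mul]⟩
    choose vv hv0 hv1 using hv
    exact ⟨fun j => R j l0, vv, fun j => hRnonneg j l0, hv0,
      fun j l => by rw [hv1 l j]; ring⟩
  · exfalso
    push_neg at hall
    obtain ⟨l1, hl1ne, hl1not⟩ := hall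
    set inC : Fin q → Prop :=
      fun l => (∃ j, R j l ≠ 0) ∧ ∃ t : ℝ, 0 < t ∧ ∀ j, R j l = t * R j l0 with hinCdef
    set wC : Fin q → ℝ := fun l => if inC l then w l else 0 with hwCdef
    set wD : Fin q → ℝ := fun l => if (∃ j, R j l ≠ 0) ∧ ¬ inC l then w l else 0 with hwDdef
    have hwC_nn : ∀ l, 0 ≤ wC l := by
      intro l
      simp only [hwCdef]
      split
      · exact hwnn l
      · exact le_refl 0
    have hwD_nn : ∀ l, 0 ≤ wD l := by
      intro l
      simp only [hwDdef]
      split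
      · exact hwnn l
      · exact le_refl 0
    have hwzero : ∀ l, (¬ ∃ j, R j l ≠ 0) → w l = 0 := by
      intro l hl
      push_neg at hl
      have hf : (fun j => R j l) = fun _ => (0:ℝ) := funext fun j => hl j
      simp only [hwdef]
      rw [hf, np_zero hpr0]
    have hw_split : ∀ l, w l = wC l + wD l := by
      intro l
      by_cases h1 : ∃ j, R j l ≠ 0
      · by_cases h2 : inC l
        · have hC : wC l = w l := by simp only [hwCdef]; rw [if_pos h2]
          have hD : wD l = 0 := by
            simp only [hwDdef]
            exact if_neg (fun hc => hc.2 h2)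
          rw [hC, hD, add_zero]
        · have hC : wC l = 0 := by simp only [hwCdef]; rw [if_neg h2]
          have hD : wD l = w l := by simp only [hwDdef]; rw [if_pos ⟨h1, h2⟩]
          rw [hC, hD, zero_add]
      · have hC : wC l = 0 := by
          simp only [hwCdef]
          exact if_neg (fun hc => h1 hc.1)
        have hD : wD l = 0 := by
          simp only [hwDdef]
          exact if_neg (fun hc => h1 hc.1)
        rw [hC, hD, hwzero l h1, add_zero]
    have hwl_pos : ∀ l, (∃ j, R j l ≠ 0) → 0 < w l := by
      intro l hl
      obtain ⟨j, hj⟩ := hl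
      simp only [hwdef]
      exact np_pos hpr0 (fun j => hRnonneg j l) ⟨j, hj⟩
    have hl0C : inC l0 := ⟨⟨j0, hj0l0⟩, 1, one_pos, fun j => by rw [one_mul]⟩
    have hl1D : (∃ j, R j l1 ≠ 0) ∧ ¬ inC l1 := by
      refine ⟨hl1ne, fun hc => ?_⟩
      obtain ⟨t, ht, hteq⟩ := hc.2
      obtain ⟨j, hj⟩ := hl1not t ht
      exact hj (hteq j)
    have hwCl0 : wC l0 = w l0 := by simp only [hwCdef]; rw [if_pos hl0C]
    have hwDl1 : wD l1 = w l1 := by simp only [hwDdef]; rw [if_pos hl1D]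
    -- the two parts of w are separated by B
    have dichot : ∀ k, Bv B wC k = 0 ∨ Bv B wD k = 0 := by
      intro k
      by_contra hcon
      push_neg at hcon
      obtain ⟨hC0, hD0⟩ := hcon
      rw [Bv_apply] at hC0 hD0
      obtain ⟨l, _, hl⟩ := Finset.exists_ne_zero_of_sum_ne_zero hC0
      obtain ⟨l', _, hl'⟩ := Finset.exists_ne_zero_of_sum_ne_zero hD0
      have hBkl : 0 < B k l :=
        lt_of_le_of_ne (hBnonneg k l) (Ne.symm (left_ne_zero_of_mul hl))
      have hBkl' : 0 < B k l' :=
        lt_of_le_of_ne (hBnonneg k l') (Ne.symm (left_ne_zero_of_mul hl'))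
      have hwCl : wC l ≠ 0 := right_ne_zero_of_mul hl
      have hwDl : wD l' ≠ 0 := right_ne_zero_of_mul hl'
      have hlC : inC l := by
        by_contra hno
        exact hwCl (by simp only [hwCdef]; rw [if_neg hno])
      have hl'D : (∃ j, R j l' ≠ 0) ∧ ¬ inC l' := by
        by_contra hno
        exact hwDl (by simp only [hwDdef]; rw [if_neg hno])
      have hll' : l ≠ l' := fun h => hl'D.2 (h ▸ hlC)
      obtain ⟨t, ht, hteq⟩ := prop k l l' hll' hBkl hBkl' hlC.1 hl'D.1
      obtain ⟨s, hs, hseq⟩ := hlC.2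
      exact hl'D.2 ⟨hl'D.1, t * s, mul_pos ht hs, fun j => by rw [hteq j, hseq j]; ring⟩
    -- split the d-norm identity and derive the contradiction
    have hBv_split : ∀ k, Bv B w k = Bv B wC k + Bv B wD k := by
      intro k
      rw [Bv_apply, Bv_apply, Bv_apply, ← Finset.sum_add_distrib]
      exact Finset.sum_congr rfl fun l _ => by rw [hw_split l]; ring
    have hnd_split : np d (Bv B w) ^ d = np d (Bv B wC) ^ d + np d (Bv B wD) ^ d := by
      rw [np_rpow hd0 _ (Bv_nonneg hBnonneg hwnn), np_rpow hd0 _ (Bv_nonneg hBnonneg hwC_nn),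
        np_rpow hd0 _ (Bv_nonneg hBnonneg hwD_nn), ← Finset.sum_add_distrib]
      refine Finset.sum_congr rfl fun k _ => ?_
      rcases dichot k with h | h
      · rw [hBv_split k, h, zero_add, Real.zero_rpow hd0.ne', zero_add]
      · rw [hBv_split k, h, add_zero, Real.zero_rpow hd0.ne', add_zero]
    have hC_d : np d (Bv B wC) ^ d ≤ (lam * np pr wC) ^ d :=
      Real.rpow_le_rpow (np_nonneg (Bv_nonneg hBnonneg hwC_nn)) (key wC hwC_nn) hd0.le
    have hD_d : np d (Bv B wD) ^ d ≤ (lam * np pr wD) ^ d :=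
      Real.rpow_le_rpow (np_nonneg (Bv_nonneg hBnonneg hwD_nn)) (key wD hwD_nn) hd0.le
    set X : ℝ := ∑ l, wC l ^ pr with hXdef
    set Y : ℝ := ∑ l, wD l ^ pr with hYdef
    have hXpos : 0 < X := by
      rw [hXdef]
      refine Finset.sum_pos' (fun l _ => Real.rpow_nonneg (hwC_nn l) pr)
        ⟨l0, Finset.mem_univ l0, ?_⟩
      rw [hwCl0]
      exact Real.rpow_pos_of_pos (hwl_pos l0 ⟨j0, hj0l0⟩) pr
    have hYpos : 0 < Y := by
      rw [hYdef]
      refine Finset.sum_pos' (fun l _ => Real.rpow_nonneg (hwD_nn l) pr)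
        ⟨l1, Finset.mem_univ l1, ?_⟩
      rw [hwDl1]
      exact Real.rpow_pos_of_pos (hwl_pos l1 hl1ne) pr
    have hXY : np pr w ^ pr = X + Y := by
      rw [np_rpow hpr0 w hwnn, hXdef, hYdef, ← Finset.sum_add_distrib]
      refine Finset.sum_congr rfl fun l _ => ?_
      by_cases h1 : ∃ j, R j l ≠ 0
      · by_cases h2 : inC l
        · have hC : wC l = w l := by simp only [hwCdef]; rw [if_pos h2]
          have hD : wD l = 0 := by simp only [hwDdef]; exact if_neg (fun hc => hc.2 h2)
          rw [hC, hD, Real.zero_rpow hpr0.ne', add_zero]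
        · have hC : wC l = 0 := by simp only [hwCdef]; rw [if_neg h2]
          have hD : wD l = w l := by simp only [hwDdef]; rw [if_pos ⟨h1, h2⟩]
          rw [hC, hD, Real.zero_rpow hpr0.ne', zero_add]
      · have hC : wC l = 0 := by simp only [hwCdef]; exact if_neg (fun hc => h1 hc.1)
        have hD : wD l = 0 := by simp only [hwDdef]; exact if_neg (fun hc => h1 hc.1)
        rw [hC, hD, hwzero l h1, Real.zero_rpow hpr0.ne', add_zero]
    have hprd : pr * (d - 1) = d := by
      rw [hprdef]
      field_simp
    have hpow : ∀ a : Fin q → ℝ, (∀ l, 0 ≤ a l) → np pr a ^ d = (np pr a ^ pr) ^ (d - 1) := by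
      intro a ha
      rw [← Real.rpow_mul (np_nonneg ha), hprd]
    have hXC : np pr wC ^ pr = X := by rw [np_rpow hpr0 wC hwC_nn]
    have hYD : np pr wD ^ pr = Y := by rw [np_rpow hpr0 wD hwD_nn]
    -- combine everything
    have hmain : np pr w ^ d ≤ np pr wC ^ d + np pr wD ^ d := by
      have e0 : np d (Bv B w) = lam * np pr w := by rw [eq4, hPw]
      have e1 : (lam * np pr w) ^ d = lam ^ d * np pr w ^ d :=
        Real.mul_rpow hlampos.le (np_nonneg hwnn)
      have e2 : (lam * np pr wC) ^ d = lam ^ d * np pr wC ^ d :=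
        Real.mul_rpow hlampos.le (np_nonneg hwC_nn)
      have e3 : (lam * np pr wD) ^ d = lam ^ d * np pr wD ^ d :=
        Real.mul_rpow hlampos.le (np_nonneg hwD_nn)
      have hld : 0 < lam ^ d := Real.rpow_pos_of_pos hlampos d
      have : lam ^ d * np pr w ^ d ≤ lam ^ d * np pr wC ^ d + lam ^ d * np pr wD ^ d := by
        rw [← e1, ← e2, ← e3, ← e0, hnd_split]
        linarith [hC_d, hD_d]
      have h' : lam ^ d * (np pr w ^ d) ≤ lam ^ d * (np pr wC ^ d + np pr wD ^ d) := by
        rw [mul_add]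
        exact this
      exact (mul_le_mul_iff_right₀ hld).1 h'
    have hfinal : (X + Y) ^ (d - 1) ≤ X ^ (d - 1) + Y ^ (d - 1) := by
      rw [← hXY, ← hXC, ← hYD, ← hpow w hwnn, ← hpow wC hwC_nn, ← hpow wD hwD_nn]
      exact hmain
    have := rpow_superadd hXpos hYpos (by linarith : (1:ℝ) < d - 1)
    linarith
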